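/- Let A ⊆ {0,1}^n be a non-empty monotone set. Then for every function f : A → ℝ and every monotone increasing function g : A → ℝ, μ(A)^{−1/2}·dist₂^mono(T[f]) ≤ ‖f − g‖₂, where ‖·‖₂ is the L² norm with respect to the uniform measure on A. -/

import Mathlib

open Finset

/-- Flip the `i`-th bit of `x`. -/
def bflip {n : ℕ} (x : Fin n → Bool) (i : Fin n) : Fin n → Bool := Function.update x i (!x i)

/-- Set the `i`-th bit of `x` to `b`. -/
def bset {n : ℕ} (x : Fin n → Bool) (i : Fin n) (b : Bool) : Fin n → Bool := Function.update x i b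

/-- Density of `A` under the uniform measure on the hypercube. -/
noncomputable def mu {n : ℕ} (A : Finset (Fin n → Bool)) : ℝ := (A.card : ℝ) / 2 ^ n

/-- Expectation of `f` under the uniform measure on `A`. -/
noncomputable def expA {n : ℕ} (A : Finset (Fin n → Bool)) (f : (Fin n → Bool) → ℝ) : ℝ :=
  (∑ x ∈ A, f x) / (A.card : ℝ)

/-- Variance of `f` under the uniform measure on `A`. -/
noncomputable def varA {n : ℕ} (A : Finset (Fin n → Bool)) (f : (Fin n → Bool) → ℝ) : ℝ :=
  expA A (fun x => (f x - expA A f) ^ 2)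

/-- Covariance of `f` and `g` under the uniform measure on `A`. -/
noncomputable def covA {n : ℕ} (A : Finset (Fin n → Bool)) (f g : (Fin n → Bool) → ℝ) : ℝ :=
  expA A (fun x => (f x - expA A f) * (g x - expA A g))

/-- Dirichlet form of `f` on the subgraph of the hypercube induced by `A`. -/
noncomputable def dirA {n : ℕ} (A : Finset (Fin n → Bool)) (f : (Fin n → Bool) → ℝ) : ℝ :=
  (1 / 4) * expA A (fun x => ∑ i, (f x - f (bflip x i)) ^ 2 * (if bflip x i ∈ A then (1 : ℝ) else 0))

/-- Expectation of `f` under the uniform measure on the whole hypercube. -/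
noncomputable def expC {n : ℕ} (f : (Fin n → Bool) → ℝ) : ℝ := (∑ x, f x) / 2 ^ n

/-- The upward boundary (directed Dirichlet energy) `𝔈⁻(f)`. -/
noncomputable def energyMinus {n : ℕ} (f : (Fin n → Bool) → ℝ) : ℝ :=
  (1 / 4) * expC (fun x => ∑ i, (min 0 (f (bset x i true) - f (bset x i false))) ^ 2)

/-- The `L²`-distance of `f` to monotone functions on the hypercube. -/
noncomputable def dist2mono {n : ℕ} (f : (Fin n → Bool) → ℝ) : ℝ :=
  ⨅ g : {g : (Fin n → Bool) → ℝ // Monotone g}, Real.sqrt (expC fun x => (f x - g.1 x) ^ 2)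

/-- `f` is monotone increasing on the poset `A`. -/
def MonoIncrOn {n : ℕ} (A : Finset (Fin n → Bool)) (f : (Fin n → Bool) → ℝ) : Prop :=
  ∀ x ∈ A, ∀ y ∈ A, x ≤ y → f x ≤ f y

/-- `f` is non-constant on `A`. -/
def NonconstOn {n : ℕ} (A : Finset (Fin n → Bool)) (f : (Fin n → Bool) → ℝ) : Prop :=
  ∃ x ∈ A, ∃ y ∈ A, f x ≠ f y

/-- The approximate FKG ratio `δ(A)`. -/
noncomputable def fkgRatio {n : ℕ} (A : Finset (Fin n → Bool)) : ℝ :=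
  min 0 (sInf {r : ℝ | ∃ f g : (Fin n → Bool) → ℝ, MonoIncrOn A f ∧ MonoIncrOn A g ∧
    NonconstOn A f ∧ NonconstOn A g ∧ r = covA A f g / Real.sqrt (varA A f * varA A g)})

/-- The extension operator `T`. -/
noncomputable def extT {n : ℕ} (A : Finset (Fin n → Bool)) (hA : A.Nonempty)
    (f : (Fin n → Bool) → ℝ) : (Fin n → Bool) → ℝ :=
  fun x => if x ∈ A then f x else A.inf' hA f

/-- The coordinate component `ℒ^{(i)}` of the directed Laplacian. -/
noncomputable def lapI {n : ℕ} (f : (Fin n → Bool) → ℝ) (i : Fin n) (x : Fin n → Bool) : ℝ :=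
  (1 / 2) * (f (bflip x i) - f x) * (if f (bset x i true) < f (bset x i false) then (1 : ℝ) else 0)

/-- The directed Laplacian `ℒ⁻`. -/
noncomputable def lapMinus {n : ℕ} (f : (Fin n → Bool) → ℝ) (x : Fin n → Bool) : ℝ :=
  ∑ i, lapI f i x

/-- for every monotone increasing `g : A → ℝ`,
`μ(A)^{−1/2}·dist₂^mono(T[f]) ≤ ‖f − g‖₂`. -/
theorem stmt_12 (n : ℕ) (A : Finset (Fin n → Bool)) (hA : A.Nonempty)
    (hmono : ∀ x ∈ A, ∀ y : Fin n → Bool, x ≤ y → y ∈ A)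
    (f g : (Fin n → Bool) → ℝ) (hg : MonoIncrOn A g) :
    (Real.sqrt (mu A))⁻¹ * dist2mono (extT A hA f) ≤
      Real.sqrt (expA A (fun x => (f x - g x) ^ 2)) := by

  classical
  set c : ℝ := A.inf' hA f with hc
  set G : (Fin n → Bool) → ℝ := fun x => if x ∈ A then max (g x) c else c with hG
  have hGmono : Monotone G := by
    intro x y hxy
    by_cases hx : x ∈ A
    · have hy : y ∈ A := hmono x hx y hxy
      simp only [hG, if_pos hx, if_pos hy]
      exact max_le_max (hg x hx y hy hxy) le_rfl
    · simp only [hG, if_neg hx]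
      by_cases hy : y ∈ A
      · simp only [if_pos hy]; exact le_max_right _ _
      · simp [if_neg hy]
  have hcard : (0:ℝ) < (A.card : ℝ) := by
    exact_mod_cast Finset.card_pos.mpr hA
  have hmu : (0:ℝ) < mu A := by
    unfold mu; positivity
  have hpoint : ∀ x ∈ A, (f x - G x) ^ 2 ≤ (f x - g x) ^ 2 := by
    intro x hx
    simp only [hG, if_pos hx]
    rcases le_total c (g x) with h | h
    · rw [max_eq_left h]
    · rw [max_eq_right h]
      have hcf : c ≤ f x := Finset.inf'_le f hx
      have h1 : 0 ≤ f x - c := by linarith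
      have h2 : f x - c ≤ f x - g x := by linarith
      exact pow_le_pow_left₀ h1 h2 2
  have hsum : expC (fun x => (extT A hA f x - G x) ^ 2)
      ≤ mu A * expA A (fun x => (f x - g x) ^ 2) := by
    unfold expC expA mu
    rw [div_mul_div_comm, mul_comm ((2:ℝ)^n) (A.card:ℝ), ← div_mul_div_comm,
      div_self (ne_of_gt hcard), one_mul]
    apply div_le_div_of_nonneg_right _ (by positivity)
    rw [← Finset.sum_filter_add_sum_filter_not Finset.univ (· ∈ A)]
    have h1 : ∀ x ∈ Finset.univ.filter (· ∉ A),
        (extT A hA f x - G x) ^ 2 = 0 := by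
      intro x hx
      simp only [Finset.mem_filter] at hx
      simp [extT, hG, if_neg hx.2, hc]
    rw [Finset.sum_congr rfl h1, Finset.sum_const_zero, add_zero]
    have h2 : Finset.univ.filter (· ∈ A) = A := by
      ext x; simp
    rw [h2]
    apply Finset.sum_le_sum
    intro x hx
    simp only [extT, if_pos hx]
    exact hpoint x hx
  have hexpAnn : 0 ≤ expA A (fun x => (f x - g x) ^ 2) := by
    unfold expA
    apply div_nonneg _ hcard.le
    exact Finset.sum_nonneg fun x _ => sq_nonneg _
  have hdist : dist2mono (extT A hA f)
      ≤ Real.sqrt (mu A) * Real.sqrt (expA A (fun x => (f x - g x) ^ 2)) := by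
    rw [← Real.sqrt_mul hmu.le]
    have := ciInf_le_of_le (f := fun g' : {g : (Fin n → Bool) → ℝ // Monotone g} =>
        Real.sqrt (expC fun x => (extT A hA f x - g'.1 x) ^ 2))
      (c := ⟨G, hGmono⟩)
      ⟨0, by rintro _ ⟨g', rfl⟩; exact Real.sqrt_nonneg _⟩
      (Real.sqrt_le_sqrt hsum)
    exact this
  rw [inv_mul_le_iff₀ (Real.sqrt_pos.mpr hmu)]
  exact hdist
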